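/- arXiv:1901.09372 — 2 statements merged into one kernel-verified Lean document; each statement's English description precedes it below -/
import Mathlib

section
/- Let b_s, b_t, c_s, c_t be integers with |b_s| = |b_t| ≠ 0, and suppose that (b_s = b_t implies c_s ≠ c_t) and (b_s = −b_t implies c_s ≠ −c_t). Then there exists at most one nonzero integer θ such that |b_s + θ·c_s| = |b_t + θ·c_t|. -/
theorem stmt_2 (bs bt cs ct : ℤ) (hb : |bs| = |bt|) (hb0 : bs ≠ 0)
    (h1 : bs = bt → cs ≠ ct) (h2 : bs = -bt → cs ≠ -ct) :
    {θ : ℤ | θ ≠ 0 ∧ |bs + θ * cs| = |bt + θ * ct|}.Subsingleton := by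
  intro θ1 hm1 θ2 hm2
  obtain ⟨hθ1, he1⟩ := hm1
  obtain ⟨hθ2, he2⟩ := hm2
  rw [abs_eq_abs] at hb he1 he2
  rcases hb with hb | hb
  · have hc := h1 hb
    subst hb
    have key : ∀ θ : ℤ, θ ≠ 0 →
        (bs + θ * cs = bs + θ * ct ∨ bs + θ * cs = -(bs + θ * ct)) →
        θ * (cs + ct) = -2 * bs := by
      intro θ hθ h
      rcases h with h | h
      · exfalso
        apply hc
        apply mul_left_cancel₀ hθ
        linarith
      · linarith
    have k1 := key θ1 hθ1 he1
    have k2 := key θ2 hθ2 he2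
    have hcc : cs + ct ≠ 0 := by
      intro h
      rw [h, mul_zero] at k1
      omega
    exact mul_right_cancel₀ hcc (k1.trans k2.symm)
  · have hc := h2 hb
    rw [hb] at he1 he2 hb0
    have key : ∀ θ : ℤ, θ ≠ 0 →
        (-bt + θ * cs = bt + θ * ct ∨ -bt + θ * cs = -(bt + θ * ct)) →
        θ * (cs - ct) = 2 * bt := by
      intro θ hθ h
      rcases h with h | h
      · linarith
      · exfalso
        apply hc
        apply mul_left_cancel₀ hθ
        linarith
    have k1 := key θ1 hθ1 he1
    have k2 := key θ2 hθ2 he2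
    have hcc : cs - ct ≠ 0 := by
      intro h
      rw [h, mul_zero] at k1
      omega
    exact mul_right_cancel₀ hcc (k1.trans k2.symm)
end

section
/- Let 0 < γ < 1 and let η > 0. Suppose n is a positive integer with (n+1)^γ − n^γ ≤ η. If n ∈ {⌊m^{1/γ}⌋ : m ∈ ℕ}, then either 1 − {n^γ} ≤ η or {n^γ} = 0. -/
theorem stmt_6 (γ : ℝ) (hγ0 : 0 < γ) (hγ1 : γ < 1) (η : ℝ) (hη : 0 < η)
    (n : ℕ) (hn : 0 < n) (hgap : ((n : ℝ) + 1) ^ γ - (n : ℝ) ^ γ ≤ η)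
    (hmem : ∃ m : ℕ, (n : ℤ) = ⌊(m : ℝ) ^ (1/γ)⌋) :
    1 - Int.fract ((n : ℝ) ^ γ) ≤ η ∨ Int.fract ((n : ℝ) ^ γ) = 0 := by
  obtain ⟨m, hm⟩ := hmem
  have hmn0 : (0:ℝ) ≤ (m:ℝ) ^ (1/γ) := Real.rpow_nonneg (Nat.cast_nonneg m) _
  have h1 : (n:ℝ) ≤ (m:ℝ) ^ (1/γ) := by
    have := Int.floor_le ((m:ℝ) ^ (1/γ))
    rw [← hm] at this; exact_mod_cast this
  have h2 : (m:ℝ) ^ (1/γ) < (n:ℝ) + 1 := by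
    have := Int.lt_floor_add_one ((m:ℝ) ^ (1/γ))
    rw [← hm] at this; exact_mod_cast this
  have key : ((m:ℝ) ^ (1/γ)) ^ γ = (m:ℝ) := by
    rw [← Real.rpow_mul (Nat.cast_nonneg m), one_div, inv_mul_cancel₀ hγ0.ne',
      Real.rpow_one]
  have hA : (n:ℝ)^γ ≤ (m:ℝ) := by
    calc (n:ℝ)^γ ≤ ((m:ℝ)^(1/γ))^γ := Real.rpow_le_rpow (Nat.cast_nonneg n) h1 hγ0.le
    _ = m := key
  have hB : (m:ℝ) < ((n:ℝ)+1)^γ := by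
    calc (m:ℝ) = ((m:ℝ)^(1/γ))^γ := key.symm
    _ < ((n:ℝ)+1)^γ := Real.rpow_lt_rpow hmn0 h2 hγ0
  rcases eq_or_lt_of_le hA with h | h
  · right; rw [h, Int.fract_natCast]
  · left
    have hfl : (⌊(n:ℝ)^γ⌋ : ℝ) < (m:ℝ) := lt_of_le_of_lt (Int.floor_le _) h
    have hflz : ⌊(n:ℝ)^γ⌋ + 1 ≤ (m:ℤ) := by exact_mod_cast hfl
    have hflr : (⌊(n:ℝ)^γ⌋ : ℝ) + 1 ≤ (m:ℝ) := by exact_mod_cast hflz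
    have : 1 - Int.fract ((n:ℝ)^γ) ≤ (m:ℝ) - (n:ℝ)^γ := by
      rw [Int.fract]; linarith
    linarith
end
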